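/- Let n ≥ 2, i ∈ {2,…,n}, and wᵢ the permutation matrix of the transposition (i n). For any g in the Bruhat cell B·wᵢ·Q/Q of GLₙ/Q (B upper triangular Borel, Q mirabolic), the one-parameter subgroup T₁ = {diag(t,1,…,1)} is contained in the stabilizer of g under the left multiplication action of T. -/

import Mathlib

open Matrix

/-- If the `n`-th row of `A` is the standard basis vector `eₙ`, then the `n`-th row
of `A * B` is the `n`-th row of `B`. -/
lemma row_single_mul_aux {m : Type*} [Fintype m] [DecidableEq m] {R : Type*} [Semiring R]
    (A B : Matrix m m R) (n : m) (h : ∀ j, A n j = if j = n then 1 else 0) (j : m) :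
    (A * B) n j = B n j := by
  rw [Matrix.mul_apply, Finset.sum_eq_single n]
  · rw [h n]; simp
  · intro x _ hx; rw [h x]; simp [hx]
  · simp

/-- Let `n = N+2 ≥ 2` and `i ≠ 1` (zero-indexed: `i ≠ 0`), and let `wᵢ` be the permutation
matrix of the transposition `(i n)`.  For any `g = b·wᵢ·q₀` in the Bruhat cell `B·wᵢ·Q`
(`b` upper-triangular invertible, `q₀` mirabolic), the one-parameter subgroup
`T₁ = {diag(t,1,…,1)}` lies in the stabilizer of the coset `g·Q` under left
multiplication: `diag(t,1,…,1)·g = g·q` for some mirabolic `q`. -/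
theorem T1_in_stabilizer_of_bruhat_cell (k : Type*) [Field k] (N : ℕ)
    (i : Fin (N + 2)) (hi : i ≠ 0)
    (wi : Matrix (Fin (N + 2)) (Fin (N + 2)) k)
    (hwi : wi = Matrix.of fun a b =>
      if b = Equiv.swap i (Fin.last (N + 1)) a then 1 else 0)
    (b : Matrix (Fin (N + 2)) (Fin (N + 2)) k)
    (hb : IsUnit b) (hbu : ∀ p q : Fin (N + 2), q < p → b p q = 0)
    (q₀ : Matrix (Fin (N + 2)) (Fin (N + 2)) k)
    (hq₀unit : IsUnit q₀)
    (hq₀ : ∀ j, q₀ (Fin.last (N + 1)) j = if j = Fin.last (N + 1) then 1 else 0)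
    (g : Matrix (Fin (N + 2)) (Fin (N + 2)) k)
    (hg : g = b * wi * q₀)
    (t : kˣ) :
    ∃ q : Matrix (Fin (N + 2)) (Fin (N + 2)) k, IsUnit q ∧
      (∀ j, q (Fin.last (N + 1)) j = if j = Fin.last (N + 1) then 1 else 0) ∧
      Matrix.diagonal (fun a => if a = 0 then (t : k) else 1) * g = g * q := by
  set n : Fin (N + 2) := Fin.last (N + 1) with hn
  set d : Matrix (Fin (N + 2)) (Fin (N + 2)) k :=
    Matrix.diagonal (fun a => if a = 0 then (t : k) else 1) with hd
  -- wi is an involution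
  have hwi2 : wi * wi = 1 := by
    ext a c
    simp only [hwi, Matrix.mul_apply, Matrix.of_apply, Matrix.one_apply]
    rw [Finset.sum_eq_single (Equiv.swap i n a)]
    · simp [eq_comm, Equiv.swap_apply_self]
    · intro x _ hx
      simp only [if_neg hx, zero_mul]
    · simp
  have hwiunit : IsUnit wi := IsUnit.of_mul_eq_one _ hwi2
  -- d is a unit
  have hdunit : IsUnit d := by
    refine IsUnit.of_mul_eq_one (b :=
      (Matrix.diagonal (fun a => if a = 0 then ((t⁻¹ : kˣ) : k) else 1))) ?_
    rw [hd, Matrix.diagonal_mul_diagonal]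
    convert Matrix.diagonal_one using 2
    ext a
    by_cases h : a = 0 <;> simp [h]
  -- cancellation facts
  have hbdet : IsUnit b.det := (Matrix.isUnit_iff_isUnit_det b).mp hb
  have hq₀det : IsUnit q₀.det := (Matrix.isUnit_iff_isUnit_det q₀).mp hq₀unit
  have hb1 : b * b⁻¹ = 1 := Matrix.mul_nonsing_inv b hbdet
  have hb1' : b⁻¹ * b = 1 := Matrix.nonsing_inv_mul b hbdet
  have hq1 : q₀ * q₀⁻¹ = 1 := Matrix.mul_nonsing_inv q₀ hq₀det
  have hq1' : q₀⁻¹ * q₀ = 1 := Matrix.nonsing_inv_mul q₀ hq₀det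
  -- the inverse of b is upper triangular
  haveI : Invertible b := b.invertibleOfIsUnitDet hbdet
  have hbinvtri : ∀ p q : Fin (N + 2), q < p → b⁻¹ p q = 0 :=
    fun p q h => Matrix.blockTriangular_inv_of_blockTriangular
      (M := b) (b := id) (fun p' q' h' => hbu p' q' h') h
  -- the conjugated matrix
  set M : Matrix (Fin (N + 2)) (Fin (N + 2)) k := b⁻¹ * (d * b) with hM
  set X : Matrix (Fin (N + 2)) (Fin (N + 2)) k := wi * M * wi with hX
  -- row i of M is the standard basis vector e_i
  have hMrow : ∀ j, M i j = (1 : Matrix (Fin (N + 2)) (Fin (N + 2)) k) i j := by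
    intro j
    have h0 : b⁻¹ i 0 = 0 := hbinvtri i 0 (Fin.pos_iff_ne_zero.mpr hi)
    rw [hM, Matrix.mul_apply, ← hb1', Matrix.mul_apply]
    refine Finset.sum_congr rfl fun x _ => ?_
    rw [Matrix.diagonal_mul]
    by_cases hx : x = 0
    · subst hx; rw [h0]; ring
    · simp [hx]
  -- row n of X is e_n
  have hwM : ∀ c, (wi * M) n c = (1 : Matrix (Fin (N + 2)) (Fin (N + 2)) k) i c := by
    intro c
    rw [Matrix.mul_apply, Finset.sum_eq_single i]
    · rw [← hMrow c, hwi]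
      simp [Equiv.swap_apply_right]
    · intro x _ hx
      rw [hwi]
      simp [Equiv.swap_apply_right, hx]
    · simp
  have hXrow : ∀ j, X n j = if j = n then 1 else 0 := by
    intro j
    rw [hX, Matrix.mul_apply, Finset.sum_congr rfl fun c _ => by rw [hwM c],
      Finset.sum_eq_single i]
    · rw [hwi]
      simp [Equiv.swap_apply_left]
    · intro x _ hx
      simp [Matrix.one_apply, Ne.symm hx]
    · simp
  -- row n of q₀⁻¹ is e_n
  have hq0inv : ∀ j, q₀⁻¹ n j = if j = n then 1 else 0 := by
    intro j
    have := row_single_mul_aux q₀ q₀⁻¹ n hq₀ j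
    rw [hq1] at this
    rw [← this, Matrix.one_apply]
    exact if_congr eq_comm rfl rfl
  refine ⟨q₀⁻¹ * X * q₀, ?_, ?_, ?_⟩
  · exact (((IsUnit.of_mul_eq_one _ hq1').mul
      ((hwiunit.mul ((IsUnit.of_mul_eq_one _ hb1').mul (hdunit.mul hb))).mul
        hwiunit)).mul hq₀unit)
  · intro j
    have h1 : ∀ c, (q₀⁻¹ * X) n c = if c = n then 1 else 0 := by
      intro c
      rw [row_single_mul_aux q₀⁻¹ X n hq0inv c]
      exact hXrow c
    rw [row_single_mul_aux (q₀⁻¹ * X) q₀ n h1 j]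
    exact hq₀ j
  · rw [hg, hX, hM]
    simp only [Matrix.mul_assoc]
    rw [← Matrix.mul_assoc q₀ q₀⁻¹, hq1, Matrix.one_mul,
      ← Matrix.mul_assoc wi wi, hwi2, Matrix.one_mul,
      ← Matrix.mul_assoc b b⁻¹, hb1, Matrix.one_mul]
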